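/- Localized almost minimizing chains under the anti-Lipschitz condition (Lemma 3.3, chain version): Let X be a set with a reflexive relation ≼ and τ : X → ℝ monotone along ≼, let U ⊆ X, and let d_U be a metric on U such that for all x, y ∈ U, x ≼ y implies τ(y) − τ(x) ≥ d_U(x,y). Let p ∈ X and r > 0 be such that {x ∈ X : d̂_τ(p,x) < 2r} ⊆ U, and let 0 < ε < r. Then for every q with d̂_τ(p,q) < r and d̂_τ(p,q) = τ(q) − τ(p), there exist k ≥ 0 and points x₀ = p, x₁, …, x_{2k+1} = q, all lying in {x ∈ X : d̂_τ(p,x) < 2r} ⊆ U, such that x_{2i} ≼ x_{2i+1} for all 0 ≤ i ≤ k, x_{2i+2} ≼ x_{2i+1} for all 0 ≤ i ≤ k−1, Σ_{i=0}^{k} (τ(x_{2i+1}) − τ(x_{2i})) < d̂_τ(p,q) + ε, Σ_{i=0}^{k−1} (τ(x_{2i+1}) − τ(x_{2i+2})) < ε, and moreover Σ_{i=0}^{k−1} d_U(x_{2i+1}, x_{2i+2}) < ε. -/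

import Mathlib

open scoped BigOperators

/-- A chain from `p` to `q`: a finite sequence `x 0 = p, x 1, …, x k = q` (`k ≥ 1`)
such that consecutive points are causally related in one direction or the other. -/
def IsCausalChain {X : Type*} (R : X → X → Prop) (k : ℕ) (x : ℕ → X) (p q : X) : Prop :=
  1 ≤ k ∧ x 0 = p ∧ x k = q ∧ ∀ i < k, R (x i) (x (i + 1)) ∨ R (x (i + 1)) (x i)

/-- The null length of a chain. -/
noncomputable def nullLength {X : Type*} (τ : X → ℝ) (k : ℕ) (x : ℕ → X) : ℝ :=
  ∑ i ∈ Finset.range k, |τ (x (i + 1)) - τ (x i)|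

/-- The null distance: the infimum (in `[0,∞]`, i.e. in `EReal`, of a set of
nonnegative values) of the null lengths of chains from `p` to `q`. -/
noncomputable def nullDist {X : Type*} (R : X → X → Prop) (τ : X → ℝ) (p q : X) : EReal :=
  sInf {L : EReal | ∃ k x, IsCausalChain R k x p q ∧ L = ((nullLength τ k x : ℝ) : EReal)}

/-- Localized almost minimizing chains under the anti-Lipschitz condition
(Lemma 3.3, chain version).  `d_U` is a metric on `U ⊆ X` such that `τ` is
anti-Lipschitz on `U`; the `d̂_τ`-ball of radius `2r` about `p` is contained in `U`.
For `0 < ε < r` and any `q` with `d̂_τ(p,q) < r` and `d̂_τ(p,q) = τ(q) − τ(p)`,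
there is an alternating chain from `p` to `q` lying in that ball with small future
excess, small past decrements, and total `d_U`-length of past segments less than `ε`. -/
lemma sum_even_odd (g : ℕ → ℝ) (m : ℕ) :
    ∑ j ∈ Finset.range (2*m+1), g j
      = ∑ i ∈ Finset.range (m+1), g (2*i) + ∑ i ∈ Finset.range m, g (2*i+1) := by
  induction m with
  | zero => simp
  | succ n ih =>
      have h1 : 2*(n+1)+1 = (2*n+1) + 1 + 1 := by ring
      rw [h1, Finset.sum_range_succ, Finset.sum_range_succ, ih,
        Finset.sum_range_succ (fun i => g (2*i)) (n+1),
        Finset.sum_range_succ (fun i => g (2*i+1)) n]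
      have h2 : 2*n+1+1 = 2*(n+1) := by ring
      rw [h2]; ring

lemma telescope_alt (f : ℕ → ℝ) (m : ℕ) :
    ∑ i ∈ Finset.range (m+1), (f (2*i+1) - f (2*i))
      - ∑ i ∈ Finset.range m, (f (2*i+1) - f (2*i+2)) = f (2*m+1) - f 0 := by
  induction m with
  | zero => simp
  | succ n ih =>
      rw [Finset.sum_range_succ (fun i => f (2*i+1) - f (2*i)) (n+1),
        Finset.sum_range_succ (fun i => f (2*i+1) - f (2*i+2)) n]
      have e1 : 2*(n+1) = 2*n+2 := by ring
      rw [e1]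
      linarith [ih]


lemma exists_alt {X : Type*} (R : X → X → Prop) (τ : X → ℝ) (hrefl : ∀ x, R x x) (p : X) :
    ∀ k, 1 ≤ k → ∀ (x : ℕ → X) (q : X), IsCausalChain R k x p q →
    ∃ (m : ℕ) (y : ℕ → X), y 0 = p ∧ y (2*m+1) = q ∧
      (∀ i ≤ m, R (y (2*i)) (y (2*i+1))) ∧
      (∀ i < m, R (y (2*i+2)) (y (2*i+1))) ∧
      nullLength τ (2*m+1) y ≤ nullLength τ k x := by
  intro k
  induction k with
  | zero => omega
  | succ n ih =>
    intro _ x q hc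
    obtain ⟨-, hx0, hxk, hstep⟩ := hc
    by_cases hn : n = 0
    · subst hn
      rcases hstep 0 (by omega) with hf | hb
      · refine ⟨0, x, hx0, by simpa using hxk, ?_, ?_, le_of_eq (by norm_num)⟩
        · intro i hi; interval_cases i; simpa using hf
        · intro i hi; exact absurd hi (Nat.not_lt_zero i)
      · -- R q p : use p, p, q, q
        refine ⟨1, fun j => if j ≤ 1 then p else q, by simp, by norm_num, ?_, ?_, ?_⟩
        · intro i hi; interval_cases i <;> simp [hrefl]
        · intro i hi; interval_cases i
          simpa [hx0, hxk] using hb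
        · have h1 : nullLength τ (2*1+1) (fun j => if j ≤ 1 then p else q) = |τ q - τ p| := by
            show (∑ i ∈ Finset.range 3, _) = _
            simp [Finset.sum_range_succ, abs_sub_comm (τ q) (τ p)]
          have h2 : nullLength τ 1 x = |τ q - τ p| := by
            simp [nullLength, hx0, hxk]
          rw [h1, h2]
    · -- n ≥ 1
      have hn1 : 1 ≤ n := by omega
      have hc' : IsCausalChain R n x p (x n) :=
        ⟨hn1, hx0, rfl, fun i hi => hstep i (by omega)⟩
      obtain ⟨m, y, hy0, hyt, hfwd, hbwd, hlen⟩ := ih hn1 x (x n) hc'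
      rcases hstep n (by omega) with hf | hb
      · -- forward: R (x n) (x (n+1)); append trivial backward then forward
        set y' : ℕ → X := fun j => if j ≤ 2*m+1 then y j else if j = 2*m+2 then x n else q with hy'
        have e1 : ∀ j ≤ 2*m+1, y' j = y j := fun j hj => if_pos hj
        have e2 : y' (2*m+2) = x n := by
          show (if 2*m+2 ≤ 2*m+1 then y (2*m+2) else if 2*m+2 = 2*m+2 then x n else q) = x n
          rw [if_neg (by omega), if_pos rfl]
        have e3 : y' (2*m+3) = q := by
          show (if 2*m+3 ≤ 2*m+1 then y (2*m+3) else if 2*m+3 = 2*m+2 then x n else q) = q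
          rw [if_neg (by omega), if_neg (by omega)]
        refine ⟨m+1, y', (e1 0 (Nat.zero_le _)).trans hy0, ?_, ?_, ?_, ?_⟩
        · rw [show 2*(m+1)+1 = 2*m+3 from by ring]; exact e3
        · intro i hi
          rcases Nat.lt_or_ge i (m+1) with hi' | hi'
          · rw [e1 _ (by omega), e1 _ (by omega)]; exact hfwd i (by omega)
          · have hie : i = m+1 := by omega
            subst hie
            have g1 : y' (2*(m+1)) = x n := by
              rw [show 2*(m+1) = 2*m+2 from by ring]; exact e2
            have g2 : y' (2*(m+1)+1) = q := by
              rw [show 2*(m+1)+1 = 2*m+3 from by ring]; exact e3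
            rw [g1, g2]; rw [hxk] at hf; exact hf
        · intro i hi
          rcases Nat.lt_or_ge i m with hi' | hi'
          · rw [e1 _ (by omega), e1 _ (by omega)]; exact hbwd i hi'
          · have hie : i = m := by omega
            subst hie
            rw [e2, e1 _ (le_refl _), hyt]; exact hrefl _
        · have hsum : nullLength τ (2*(m+1)+1) y'
              = nullLength τ (2*m+1) y' + |τ (y' (2*m+1+1)) - τ (y' (2*m+1))|
                + |τ (y' (2*m+1+1+1)) - τ (y' (2*m+1+1))| := by
            rw [show 2*(m+1)+1 = (2*m+1) + 1 + 1 from by ring]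
            rw [nullLength, Finset.sum_range_succ, Finset.sum_range_succ]
            rfl
          have hpre : nullLength τ (2*m+1) y' = nullLength τ (2*m+1) y := by
            apply Finset.sum_congr rfl
            intro i hi
            simp only [Finset.mem_range] at hi
            rw [e1 i (by omega), e1 (i+1) (by omega)]
          have hx1 : nullLength τ (n+1) x = nullLength τ n x + |τ (x (n+1)) - τ (x n)| := by
            rw [nullLength, Finset.sum_range_succ]; rfl
          have i1 : (2*m+1+1 : ℕ) = 2*m+2 := by omega
          have i2 : (2*m+1+1+1 : ℕ) = 2*m+3 := by omega
          rw [hsum, hpre, i2, i1, e2, e3, e1 _ (le_refl _), hyt, hx1, hxk]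
          simp only [sub_self, abs_zero, add_zero]
          linarith [hlen]
      · -- backward: R q (x n)
        set y' : ℕ → X := fun j => if j ≤ 2*m+1 then y j else q with hy'
        have e1 : ∀ j ≤ 2*m+1, y' j = y j := fun j hj => if_pos hj
        have e2 : y' (2*m+2) = q := by
          show (if 2*m+2 ≤ 2*m+1 then y (2*m+2) else q) = q
          rw [if_neg (by omega)]
        have e3 : y' (2*m+3) = q := by
          show (if 2*m+3 ≤ 2*m+1 then y (2*m+3) else q) = q
          rw [if_neg (by omega)]
        refine ⟨m+1, y', (e1 0 (Nat.zero_le _)).trans hy0, ?_, ?_, ?_, ?_⟩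
        · rw [show 2*(m+1)+1 = 2*m+3 from by ring]; exact e3
        · intro i hi
          rcases Nat.lt_or_ge i (m+1) with hi' | hi'
          · rw [e1 _ (by omega), e1 _ (by omega)]; exact hfwd i (by omega)
          · have hie : i = m+1 := by omega
            subst hie
            have g1 : y' (2*(m+1)) = q := by
              rw [show 2*(m+1) = 2*m+2 from by ring]; exact e2
            have g2 : y' (2*(m+1)+1) = q := by
              rw [show 2*(m+1)+1 = 2*m+3 from by ring]; exact e3
            rw [g1, g2]; exact hrefl _
        · intro i hi
          rcases Nat.lt_or_ge i m with hi' | hi'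
          · rw [e1 _ (by omega), e1 _ (by omega)]; exact hbwd i hi'
          · have hie : i = m := by omega
            subst hie
            rw [e2, e1 _ (le_refl _), hyt]
            rw [hxk] at hb; exact hb
        · have hsum : nullLength τ (2*(m+1)+1) y'
              = nullLength τ (2*m+1) y' + |τ (y' (2*m+1+1)) - τ (y' (2*m+1))|
                + |τ (y' (2*m+1+1+1)) - τ (y' (2*m+1+1))| := by
            rw [show 2*(m+1)+1 = (2*m+1) + 1 + 1 from by ring]
            rw [nullLength, Finset.sum_range_succ, Finset.sum_range_succ]
            rfl
          have hpre : nullLength τ (2*m+1) y' = nullLength τ (2*m+1) y := by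
            apply Finset.sum_congr rfl
            intro i hi
            simp only [Finset.mem_range] at hi
            rw [e1 i (by omega), e1 (i+1) (by omega)]
          have hx1 : nullLength τ (n+1) x = nullLength τ n x + |τ (x (n+1)) - τ (x n)| := by
            rw [nullLength, Finset.sum_range_succ]; rfl
          have i1 : (2*m+1+1 : ℕ) = 2*m+2 := by omega
          have i2 : (2*m+1+1+1 : ℕ) = 2*m+3 := by omega
          rw [hsum, hpre, i2, i1, e2, e3, e1 _ (le_refl _), hyt, hx1, hxk]
          simp only [sub_self, abs_zero, add_zero]
          rw [abs_sub_comm (τ q) (τ (x n))]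
          linarith [hlen]

theorem localized_almost_minimizing_chain {X : Type*} (R : X → X → Prop) (τ : X → ℝ)
    (hrefl : ∀ x, R x x)
    (hmono : ∀ x y, R x y → τ x ≤ τ y)
    (U : Set X) (dU : X → X → ℝ)
    (hd_eq : ∀ x ∈ U, ∀ y ∈ U, (dU x y = 0 ↔ x = y))
    (hd_symm : ∀ x ∈ U, ∀ y ∈ U, dU x y = dU y x)
    (hd_tri : ∀ x ∈ U, ∀ y ∈ U, ∀ z ∈ U, dU x z ≤ dU x y + dU y z)
    (hanti : ∀ x ∈ U, ∀ y ∈ U, R x y → dU x y ≤ τ y - τ x)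
    (p : X) (r : ℝ) (hr : 0 < r)
    (hball : {x : X | nullDist R τ p x < ((2 * r : ℝ) : EReal)} ⊆ U)
    (ε : ℝ) (hε : 0 < ε) (hεr : ε < r)
    (q : X) (hq : nullDist R τ p q < ((r : ℝ) : EReal))
    (h : nullDist R τ p q = ((τ q - τ p : ℝ) : EReal)) :
    ∃ (k : ℕ) (x : ℕ → X),
      x 0 = p ∧ x (2 * k + 1) = q ∧
      (∀ j ≤ 2 * k + 1, nullDist R τ p (x j) < ((2 * r : ℝ) : EReal)) ∧
      (∀ i ≤ k, R (x (2 * i)) (x (2 * i + 1))) ∧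
      (∀ i < k, R (x (2 * i + 2)) (x (2 * i + 1))) ∧
      ((∑ i ∈ Finset.range (k + 1), (τ (x (2 * i + 1)) - τ (x (2 * i))) : ℝ) : EReal)
        < nullDist R τ p q + ((ε : ℝ) : EReal) ∧
      (∑ i ∈ Finset.range k, (τ (x (2 * i + 1)) - τ (x (2 * i + 2)))) < ε ∧
      (∑ i ∈ Finset.range k, dU (x (2 * i + 1)) (x (2 * i + 2))) < ε := by
  have hDr : τ q - τ p < r := by
    rw [h] at hq; exact_mod_cast hq
  have hlt : nullDist R τ p q < (((τ q - τ p) + ε : ℝ) : EReal) := by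
    rw [h]; exact_mod_cast (by linarith : τ q - τ p < (τ q - τ p) + ε)
  obtain ⟨L, hLmem, hLlt⟩ := sInf_lt_iff.mp hlt
  obtain ⟨k, x, hc, rfl⟩ := hLmem
  have hklen : nullLength τ k x < (τ q - τ p) + ε := by exact_mod_cast hLlt
  obtain ⟨m, y, hy0, hyq, hfwd, hbwd, hle⟩ := exists_alt R τ hrefl p k hc.1 x q hc
  -- ball condition
  have hsteps : ∀ i < 2*m+1, R (y i) (y (i+1)) ∨ R (y (i+1)) (y i) := by
    intro i hi
    rcases Nat.even_or_odd i with ⟨t, ht⟩ | ⟨t, ht⟩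
    · left
      have hit : i = 2*t := by omega
      subst hit
      exact hfwd t (by omega)
    · right
      have hit : i = 2*t+1 := by omega
      subst hit
      have := hbwd t (by omega)
      rw [show (2*t+1+1 : ℕ) = 2*t+2 from by omega]
      exact this
  have hball' : ∀ j ≤ 2*m+1, nullDist R τ p (y j) < ((2 * r : ℝ) : EReal) := by
    intro j hj
    rcases Nat.eq_zero_or_pos j with h0 | h1
    · subst h0
      rw [hy0]
      have hmem : ((nullLength τ 1 (fun _ : ℕ => p) : ℝ) : EReal)
          ∈ {L : EReal | ∃ k x, IsCausalChain R k x p p ∧ L = ((nullLength τ k x : ℝ) : EReal)} :=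
        ⟨1, fun _ => p, ⟨le_refl 1, rfl, rfl, fun i _ => Or.inl (hrefl p)⟩, rfl⟩
      have h0' : nullLength τ 1 (fun _ : ℕ => p) = 0 := by simp [nullLength]
      have := sInf_le hmem
      rw [h0'] at this
      refine lt_of_le_of_lt this ?_
      exact_mod_cast (by linarith : (0:ℝ) < 2*r)
    · have hcj : IsCausalChain R j y p (y j) := ⟨h1, hy0, rfl, fun i hi => hsteps i (by omega)⟩
      have h1' : nullDist R τ p (y j) ≤ ((nullLength τ j y : ℝ) : EReal) :=
        sInf_le ⟨j, y, hcj, rfl⟩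
      have h2' : nullLength τ j y ≤ nullLength τ (2*m+1) y :=
        Finset.sum_le_sum_of_subset_of_nonneg (Finset.range_subset_range.2 hj)
          (fun i _ _ => abs_nonneg _)
      have h3' : nullLength τ j y < 2*r := by linarith
      exact lt_of_le_of_lt h1' (by exact_mod_cast h3')
  have hU' : ∀ j ≤ 2*m+1, y j ∈ U := fun j hj => hball (hball' j hj)
  -- split of the null length
  have hsplit : nullLength τ (2*m+1) y
      = (∑ i ∈ Finset.range (m+1), (τ (y (2*i+1)) - τ (y (2*i))))
        + (∑ i ∈ Finset.range m, (τ (y (2*i+1)) - τ (y (2*i+2)))) := by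
    rw [nullLength, sum_even_odd (fun j => |τ (y (j+1)) - τ (y j)|) m]
    congr 1
    · apply Finset.sum_congr rfl
      intro i hi
      simp only [Finset.mem_range] at hi
      show |τ (y (2*i+1)) - τ (y (2*i))| = τ (y (2*i+1)) - τ (y (2*i))
      exact abs_of_nonneg (sub_nonneg.2 (hmono _ _ (hfwd i (by omega))))
    · apply Finset.sum_congr rfl
      intro i hi
      simp only [Finset.mem_range] at hi
      show |τ (y (2*i+1+1)) - τ (y (2*i+1))| = τ (y (2*i+1)) - τ (y (2*i+2))
      rw [show (2*i+1+1 : ℕ) = 2*i+2 from by omega, abs_sub_comm]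
      exact abs_of_nonneg (sub_nonneg.2 (hmono _ _ (hbwd i hi)))
  have htel : (∑ i ∈ Finset.range (m+1), (τ (y (2*i+1)) - τ (y (2*i))))
      - (∑ i ∈ Finset.range m, (τ (y (2*i+1)) - τ (y (2*i+2)))) = τ q - τ p := by
    have := telescope_alt (fun j => τ (y j)) m
    rw [hyq, hy0] at this
    exact this
  have hAB : (∑ i ∈ Finset.range (m+1), (τ (y (2*i+1)) - τ (y (2*i))))
      + (∑ i ∈ Finset.range m, (τ (y (2*i+1)) - τ (y (2*i+2)))) < (τ q - τ p) + ε := by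
    rw [← hsplit]; linarith
  have hB : (∑ i ∈ Finset.range m, (τ (y (2*i+1)) - τ (y (2*i+2)))) < ε/2 := by linarith
  have hA : (∑ i ∈ Finset.range (m+1), (τ (y (2*i+1)) - τ (y (2*i)))) < (τ q - τ p) + ε/2 := by
    linarith
  have hdU : (∑ i ∈ Finset.range m, dU (y (2*i+1)) (y (2*i+2)))
      ≤ (∑ i ∈ Finset.range m, (τ (y (2*i+1)) - τ (y (2*i+2)))) := by
    apply Finset.sum_le_sum
    intro i hi
    simp only [Finset.mem_range] at hi
    have m1 : y (2*i+1) ∈ U := hU' _ (by omega)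
    have m2 : y (2*i+2) ∈ U := hU' _ (by omega)
    rw [hd_symm _ m1 _ m2]
    exact hanti _ m2 _ m1 (hbwd i hi)
  refine ⟨m, y, hy0, hyq, hball', hfwd, hbwd, ?_, by linarith, by linarith⟩
  rw [h]
  exact_mod_cast (by linarith :
    (∑ i ∈ Finset.range (m+1), (τ (y (2*i+1)) - τ (y (2*i)))) < (τ q - τ p) + ε)
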